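/- arXiv:1612.05912 — 4 statements merged into one kernel-verified Lean document; each statement's English description precedes it below -/
import Mathlib

section
/- For odd q, the number of F_{q²}-rational affine points of the curve (X^q+X)(Y^q+Y) = 1 is exactly q²(q-1). -/
open Finset Polynomial

/-- Root counting: the set of `x` with `x ^ q = c * x` has at most `q` elements. -/
lemma aux_root_bound {F : Type*} [Field F] [Fintype F] [DecidableEq F]
    (q : ℕ) (hq : 2 ≤ q) (c : F) :
    (Finset.univ.filter (fun x : F => x ^ q = c * x)).card ≤ q := by
  set P : F[X] := X ^ q - C c * X with hP
  have hPne : P ≠ 0 := by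
    intro h
    have : P.coeff q = 0 := by rw [h]; simp
    rw [hP] at this
    rw [coeff_sub, coeff_X_pow, coeff_C_mul, coeff_X] at this
    rw [if_neg (by omega : ¬ (1:ℕ) = q)] at this
    simp at this
  have hdeg : P.natDegree ≤ q := by
    refine le_trans (natDegree_sub_le _ _) ?_
    simp only [natDegree_X_pow, max_le_iff, le_refl, true_and]
    exact le_trans (natDegree_C_mul_le _ _) (by rw [natDegree_X]; omega)
  have hsub : (Finset.univ.filter (fun x : F => x ^ q = c * x)) ⊆ P.roots.toFinset := by
    intro x hx
    simp only [Finset.mem_filter, Finset.mem_univ, true_and] at hx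
    rw [Multiset.mem_toFinset, mem_roots hPne]
    simp [hP, IsRoot, hx]
  calc (Finset.univ.filter (fun x : F => x ^ q = c * x)).card
      ≤ P.roots.toFinset.card := Finset.card_le_card hsub
    _ ≤ Multiset.card P.roots := Multiset.toFinset_card_le _
    _ ≤ P.natDegree := P.card_roots'
    _ ≤ q := hdeg

/-- For odd `q`, the curve `(X^q+X)(Y^q+Y)=1` has exactly `q²(q-1)` affine
`F_{q²}`-rational points. -/
theorem stmt_7 (p : ℕ) [Fact p.Prime] (n : ℕ) (hn : 1 ≤ n) (q : ℕ) (hq : q = p ^ n)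
    (hodd : Odd q) (F : Type*) [Field F] [Fintype F] (hF : Fintype.card F = q ^ 2) :
    Nat.card {uv : F × F // (uv.1 ^ q + uv.1) * (uv.2 ^ q + uv.2) = 1}
      = q ^ 2 * (q - 1) := by
  classical
  have hp : p.Prime := Fact.out
  have hq2 : 2 ≤ q := by
    rw [hq]
    calc 2 ≤ p := hp.two_le
    _ = p ^ 1 := (pow_one p).symm
    _ ≤ p ^ n := Nat.pow_le_pow_right hp.pos hn
  -- characteristic of F is p
  haveI hchar : CharP F p := by
    obtain ⟨m, hp', hcard⟩ := FiniteField.card F (ringChar F)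
    have hpr : p = ringChar F := by
      have hpdvd : p ∣ ringChar F ^ (m : ℕ) := by
        rw [← hcard, hF, hq, ← pow_mul]
        exact dvd_pow_self p (by positivity)
      exact (Nat.prime_dvd_prime_iff_eq hp hp').mp (hp.dvd_of_dvd_pow hpdvd)
    rw [hpr]; exact ringChar.charP F
  haveI : ExpChar F p := ExpChar.prime hp
  set f : F → F := fun x => x ^ q + x with hf
  have hadd : ∀ x y : F, f (x + y) = f x + f y := by
    intro x y
    simp only [hf, hq, add_pow_char_pow]
    ring
  have hpowq2 : ∀ x : F, x ^ q ^ 2 = x := by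
    intro x
    rw [← hF]
    exact FiniteField.pow_card x
  have hfix : ∀ x : F, (f x) ^ q = f x := by
    intro x
    simp only [hf]
    rw [hq, add_pow_char_pow, ← hq, ← pow_mul, ← pow_two, hpowq2]
    ring
  set K : Finset F := Finset.univ.filter (fun x => f x = 0) with hK
  set Y : Finset F := Finset.univ.filter (fun y => y ^ q = y) with hY
  set I : Finset F := Finset.univ.image f with hI
  -- fiber sizes
  have hfiber : ∀ a : F, ∀ x0 : F, f x0 = a →
      (Finset.univ.filter (fun x => f x = a)).card = K.card := by
    intro a x0 hx0
    rw [hK]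
    apply Finset.card_nbij' (fun x => x - x0) (fun y => y + x0)
    · intro x hx
      simp only [Finset.mem_coe, Finset.mem_filter, Finset.mem_univ, true_and] at hx ⊢
      have h1 : f (x - x0) + f x0 = f x := by rw [← hadd]; ring_nf
      rw [hx, hx0] at h1
      linear_combination h1
    · intro y hy
      simp only [Finset.mem_coe, Finset.mem_filter, Finset.mem_univ, true_and] at hy ⊢
      rw [hadd, hy, hx0, zero_add]
    · intro x _; ring
    · intro y _; ring
  have hKle : K.card ≤ q := by
    have : K = Finset.univ.filter (fun x : F => x ^ q = (-1 : F) * x) := by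
      apply Finset.filter_congr
      intro x _
      simp only [hf]
      constructor
      · intro h; linear_combination h
      · intro h; linear_combination h
    rw [this]
    exact aux_root_bound q hq2 _
  have hYle : Y.card ≤ q := by
    have : Y = Finset.univ.filter (fun x : F => x ^ q = (1 : F) * x) := by
      simp [hY]
    rw [this]
    exact aux_root_bound q hq2 _
  have hIY : I ⊆ Y := by
    intro a ha
    rw [hI] at ha
    obtain ⟨x, _, rfl⟩ := Finset.mem_image.mp ha
    simp only [hY, Finset.mem_filter, Finset.mem_univ, true_and]
    exact hfix x
  have hIle : I.card ≤ q := le_trans (Finset.card_le_card hIY) hYle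
  -- q^2 = I.card * K.card
  have hsum : q ^ 2 = ∑ a ∈ I, (Finset.univ.filter (fun x => f x = a)).card := by
    rw [← hF, ← Finset.card_univ]
    apply Finset.card_eq_sum_card_fiberwise
    intro x _
    exact Finset.mem_image_of_mem f (Finset.mem_univ x)
  have hsum2 : q ^ 2 = I.card * K.card := by
    rw [hsum, Finset.sum_congr rfl (fun a ha => ?_), Finset.sum_const, smul_eq_mul]
    obtain ⟨x0, _, hx0⟩ := Finset.mem_image.mp ha
    exact hfiber a x0 hx0
  have hqpos : 0 < q := by omega
  have hKq : K.card = q := by nlinarith [hsum2, hKle, hIle]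
  have hIq : I.card = q := by nlinarith [hsum2, hKle, hIle]
  have hIeqY : I = Y := Finset.eq_of_subset_of_card_le hIY (by omega)
  -- main count
  have hequiv : {uv : F × F // (uv.1 ^ q + uv.1) * (uv.2 ^ q + uv.2) = 1} ≃
      Σ u : F, {v : F // f u * f v = 1} :=
    Equiv.subtypeProdEquivSigmaSubtype (fun u v => f u * f v = 1)
  rw [Nat.card_eq_fintype_card, Fintype.card_congr hequiv, Fintype.card_sigma]
  have hterm : ∀ u : F, Fintype.card {v : F // f u * f v = 1} =
      if f u = 0 then 0 else q := by
    intro u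
    rw [Fintype.card_subtype]
    by_cases h : f u = 0
    · simp only [h, if_true]
      rw [Finset.card_eq_zero, Finset.filter_eq_empty_iff]
      intro v _
      simp only [h, zero_mul]
      exact zero_ne_one
    · simp only [h, if_false]
      have hmem : (f u)⁻¹ ∈ I := by
        rw [hIeqY]
        simp only [hY, Finset.mem_filter, Finset.mem_univ, true_and]
        rw [inv_pow, hfix]
      obtain ⟨x0, _, hx0⟩ := Finset.mem_image.mp hmem
      have heq : (Finset.univ.filter (fun v => f u * f v = 1)) =
          (Finset.univ.filter (fun v => f v = (f u)⁻¹)) := by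
        apply Finset.filter_congr
        intro v _
        constructor
        · intro h'
          exact eq_inv_of_mul_eq_one_right h'
        · intro h'
          rw [h', mul_inv_cancel₀ h]
      rw [heq, hfiber _ x0 hx0, hKq]
  rw [Finset.sum_congr rfl (fun u _ => hterm u)]
  rw [Finset.sum_ite, Finset.sum_const, Finset.sum_const, smul_eq_mul, smul_eq_mul,
    mul_zero, zero_add]
  have hcount : (Finset.univ.filter (fun u : F => ¬ f u = 0)).card = q ^ 2 - q := by
    have := Finset.card_filter_add_card_filter_not
      (s := (Finset.univ : Finset F)) (p := fun u : F => f u = 0)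
    rw [Finset.card_univ, hF] at this
    have hK' : (Finset.univ.filter (fun u : F => f u = 0)).card = q := hKq
    omega
  rw [hcount]
  have h1 : q ^ 2 - q = q * (q - 1) := by
    rw [Nat.mul_sub, mul_one, ← pow_two]
  rw [h1]
  ring
end

section
/- The group of maps {(X,Y) ↦ (vX+α, v^{-1}Y+β) : Tr(α)=Tr(β)=0, v^(q-1)=1} acts sharply transitively on the set of F_{q²}-rational affine points of the curve (X^q+X)(Y^q+Y) = 1; in particular the stabilizer of any affine F_{q²}-rational point in this group is trivial. -/
/-- The group of maps `(x,y) ↦ (vx+α, v⁻¹y+β)` with `Tr α = Tr β = 0`, `v^(q-1) = 1`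
acts sharply transitively on the affine `F_{q²}`-rational points of
`(X^q+X)(Y^q+Y) = 1`: for any two such points there is a unique such map taking the
first to the second; in particular point stabilizers are trivial. -/
theorem stmt_10 (p : ℕ) [Fact p.Prime] (n : ℕ) (hn : 1 ≤ n) (q : ℕ) (hq : q = p ^ n)
    (F : Type*) [Field F] [Fintype F] (hF : Fintype.card F = q ^ 2)
    (u₁ v₁ u₂ v₂ : F)
    (h₁ : (u₁ ^ q + u₁) * (v₁ ^ q + v₁) = 1)
    (h₂ : (u₂ ^ q + u₂) * (v₂ ^ q + v₂) = 1) :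
    ∃! g : F × F × F,
      (g.1 ^ q + g.1 = 0 ∧ g.2.1 ^ q + g.2.1 = 0 ∧ g.2.2 ^ (q - 1) = 1) ∧
      g.2.2 * u₁ + g.1 = u₂ ∧ g.2.2⁻¹ * v₁ + g.2.1 = v₂ := by
  have hp : p.Prime := Fact.out
  -- characteristic
  obtain ⟨m, hrp, hcard⟩ := FiniteField.card F (ringChar F)
  have hpr : p = ringChar F := by
    have h1 : p ∣ (ringChar F) ^ (m : ℕ) := by
      rw [← hcard, hF, hq, ← pow_mul]
      exact dvd_pow_self p (by positivity)
    exact (Nat.prime_dvd_prime_iff_eq hp hrp).mp (hp.dvd_of_dvd_pow h1)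
  haveI hchar : CharP F p := hpr ▸ ringChar.charP F
  have hq1 : 1 ≤ q := by rw [hq]; exact Nat.one_le_pow _ _ hp.pos
  have hq2 : 2 ≤ q := by
    rw [hq]; calc 2 ≤ p := hp.two_le
    _ = p ^ 1 := (pow_one p).symm
    _ ≤ p ^ n := Nat.pow_le_pow_right hp.pos hn
  -- q-power facts
  have hadd : ∀ a b : F, (a + b) ^ q = a ^ q + b ^ q := fun a b => by
    rw [hq]; exact add_pow_char_pow a b p n
  have hsub : ∀ a b : F, (a - b) ^ q = a ^ q - b ^ q := fun a b => by
    rw [hq]; exact sub_pow_char_pow a b n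
  have hqq : ∀ x : F, (x ^ q) ^ q = x := fun x => by
    rw [← pow_mul, ← sq, ← hF]; exact FiniteField.pow_card x
  set t₁ := u₁ ^ q + u₁ with ht₁
  set t₂ := u₂ ^ q + u₂ with ht₂
  set s₁ := v₁ ^ q + v₁ with hs₁
  set s₂ := v₂ ^ q + v₂ with hs₂
  have htfix : ∀ x : F, (x ^ q + x) ^ q = x ^ q + x := fun x => by
    rw [hadd, hqq]; ring
  have ht₁0 : t₁ ≠ 0 := fun h => by simp [← ht₁, h] at h₁
  have ht₂0 : t₂ ≠ 0 := fun h => by simp [← ht₂, h] at h₂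
  have hs₁0 : s₁ ≠ 0 := fun h => by simp [← hs₁, h] at h₁
  set v : F := t₂ * t₁⁻¹ with hv
  have hv0 : v ≠ 0 := mul_ne_zero ht₂0 (inv_ne_zero ht₁0)
  have hvq : v ^ q = v := by
    rw [hv, mul_pow, inv_pow, htfix, htfix]
  have hvq1 : v ^ (q - 1) = 1 := by
    have : v ^ (q - 1) * v = 1 * v := by
      rw [← pow_succ, Nat.sub_add_cancel hq1, hvq, one_mul]
    exact mul_right_cancel₀ hv0 this
  have hviq : (v⁻¹) ^ q = v⁻¹ := by rw [inv_pow, hvq]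
  have hs₂eq : s₂ = t₂⁻¹ := by
    field_simp at h₂ ⊢; linear_combination h₂
  have hs₁eq : s₁ = t₁⁻¹ := by
    field_simp at h₁ ⊢; linear_combination h₁
  refine ⟨⟨u₂ - v * u₁, v₂ - v⁻¹ * v₁, v⟩, ⟨⟨?_, ?_, hvq1⟩, by ring, by ring⟩, ?_⟩
  · rw [hsub, mul_pow, hvq]
    have : u₂ ^ q + u₂ - v * (u₁ ^ q + u₁) = 0 := by
      rw [← ht₁, ← ht₂, hv]; field_simp; ring
    linear_combination this
  · rw [hsub, mul_pow, hviq]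
    have hvinv : v⁻¹ = t₁ * t₂⁻¹ := by
      rw [hv]; field_simp
    have : v₂ ^ q + v₂ - v⁻¹ * (v₁ ^ q + v₁) = 0 := by
      rw [← hs₁, ← hs₂, hvinv, hs₁eq, hs₂eq]; field_simp; ring
    linear_combination this
  · rintro ⟨α, β, w⟩ ⟨⟨hα, hβ, hw⟩, he1, he2⟩
    have hw0 : w ≠ 0 := fun h => by
      rw [h, zero_pow (by omega)] at hw; exact one_ne_zero hw.symm
    have hwq : w ^ q = w := by
      have : w ^ q = w ^ (q - 1) * w := by rw [← pow_succ, Nat.sub_add_cancel hq1]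
      rw [this, hw, one_mul]
    have hweq : w = v := by
      have key : t₂ = w * t₁ := by
        have : u₂ ^ q + u₂ = (w * u₁ + α) ^ q + (w * u₁ + α) := by rw [he1]
        rw [hadd, mul_pow, hwq] at this
        rw [ht₂, ht₁, this]; linear_combination hα
      rw [hv, key]; field_simp
    have hαeq : α = u₂ - w * u₁ := by linear_combination he1
    have hβeq : β = v₂ - w⁻¹ * v₁ := by linear_combination he2
    simp [Prod.ext_iff, hαeq, hβeq, hweq]
end

section
/- If (u,v) satisfies (u^q+u)(v^q+v) = c with c ≠ 0, and Y = v + v₁t + v₂t² + ⋯ is the power series solution of (X^q+X)(Y^q+Y) = c at X = u + t, then vᵢ = (-1)ⁱ (v^q+v)/(u^q+u)ⁱ for 1 ≤ i ≤ q-1. -/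
open PowerSeries

/-- If `y(t) = v + Σ vᵢ tⁱ` is the power series solution of `(X^q+X)(Y^q+Y) = c` at
`X = u + t`, then `vᵢ = (-1)ⁱ (v^q+v)/(u^q+u)ⁱ` for `1 ≤ i ≤ q-1`. -/
theorem stmt_11 (K : Type*) [Field K] [IsAlgClosed K] (p : ℕ) [Fact p.Prime] [CharP K p]
    (n : ℕ) (hn : 1 ≤ n) (q : ℕ) (hq : q = p ^ n) (c : K) (hc : c ≠ 0)
    (u v : K) (huv : (u ^ q + u) * (v ^ q + v) = c) (hu : u ^ q + u ≠ 0)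
    (y : PowerSeries K) (hy0 : PowerSeries.coeff 0 y = v)
    (hy : ((PowerSeries.C u + PowerSeries.X) ^ q + (PowerSeries.C u + PowerSeries.X)) *
        (y ^ q + y) = PowerSeries.C c) :
    ∀ i : ℕ, 1 ≤ i → i ≤ q - 1 →
      PowerSeries.coeff i y = (-1) ^ i * (v ^ q + v) / (u ^ q + u) ^ i := by
  haveI : CharP (PowerSeries K) p :=
    charP_of_injective_ringHom (C_injective (R := K)) p
  obtain ⟨a, ha⟩ : ∃ a : K, a = u ^ q + u := ⟨_, rfl⟩
  obtain ⟨w, hw⟩ : ∃ w : K, w = v ^ q + v := ⟨_, rfl⟩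
  rw [← ha] at hu ⊢
  rw [← hw]
  have hq2 : 2 ≤ q := by
    rw [hq]
    have := Nat.one_lt_pow (by omega : n ≠ 0) (Fact.out (p := p.Prime)).one_lt
    omega
  have hfrob : (PowerSeries.C u + PowerSeries.X) ^ q
      = PowerSeries.C (u ^ q) + PowerSeries.X ^ q := by
    rw [hq, add_pow_char_pow, map_pow]
  rw [hfrob] at hy
  have hy' : (PowerSeries.C a + (PowerSeries.X + PowerSeries.X ^ q)) * (y ^ q + y)
      = PowerSeries.C c := by
    rw [← hy, ha, map_add]; ring
  have hyq : ∀ j : ℕ, 1 ≤ j → j < q → PowerSeries.coeff j (y ^ q) = 0 := by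
    intro j hj1 hjq
    have hdec := eq_X_mul_shift_add_const y
    set g : PowerSeries K := mk fun m => PowerSeries.coeff (m + 1) y with hg
    have hyqdec : y ^ q = PowerSeries.X ^ q * g ^ q
        + PowerSeries.C ((constantCoeff y) ^ q) := by
      conv_lhs => rw [hdec]
      rw [hq, add_pow_char_pow, mul_pow, map_pow]
    rw [hyqdec, map_add, mul_comm, coeff_mul_X_pow', if_neg (by omega), PowerSeries.coeff_C,
      if_neg (by omega), add_zero]
  have hv : constantCoeff y = v := by rw [← coeff_zero_eq_constantCoeff]; exact hy0
  have hconst : PowerSeries.coeff 0 (y ^ q + y) = w := by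
    rw [map_add, coeff_zero_eq_constantCoeff, map_pow, hv, hw]
  have hrec : ∀ i : ℕ, 1 ≤ i → i ≤ q - 1 →
      a * PowerSeries.coeff i y + PowerSeries.coeff (i - 1) (y ^ q + y) = 0 := by
    intro i hi1 hiq
    obtain ⟨j, rfl⟩ : ∃ j, i = j + 1 := ⟨i - 1, by omega⟩
    have h2 := congrArg (PowerSeries.coeff (j + 1)) hy'
    rw [add_mul, add_mul, map_add, map_add, coeff_C_mul, mul_comm PowerSeries.X,
      mul_comm (PowerSeries.X ^ q), coeff_succ_mul_X, coeff_mul_X_pow',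
      if_neg (by omega : ¬ q ≤ j + 1), PowerSeries.coeff_C,
      if_neg (by omega)] at h2
    rw [show j + 1 - 1 = j from rfl]
    have hiy : PowerSeries.coeff (j + 1) (y ^ q + y) = PowerSeries.coeff (j + 1) y := by
      rw [map_add, hyq (j + 1) hi1 (by omega), zero_add]
    rw [hiy] at h2
    simpa [pow_one] using h2
  intro i hi1
  induction i, hi1 using Nat.le_induction with
  | base =>
    intro hiq
    have h1 := hrec 1 le_rfl hiq
    rw [show (1:ℕ) - 1 = 0 from rfl, hconst] at h1
    field_simp
    linear_combination h1
  | succ i hi ih =>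
    intro hiq
    have hi' : i ≤ q - 1 := by omega
    have h1 := hrec (i + 1) (by omega) hiq
    rw [show i + 1 - 1 = i from rfl, map_add, hyq i hi (by omega), zero_add, ih hi'] at h1
    have hane : a ^ i ≠ 0 := pow_ne_zero _ hu
    field_simp at h1 ⊢
    linear_combination h1
end

section
/- The imaginary hyperosculating conic condition: for a point (u,v) on the curve (X^q+X)(Y^q+Y) = c with u^q+u ≠ 0, the condition (v + v₁u)^q + v₁^q·u + v = 0 (where v₁ = -c/(u^q+u)²) is equivalent to c^{-1}(u^q+u)² ∈ F_q. -/
/-- For `(u,v)` on the curve with `u^q+u ≠ 0` and `v₁ = -c/(u^q+u)²`, the condition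
`(v + v₁u)^q + v₁^q u + v = 0` is equivalent to `c⁻¹(u^q+u)² ∈ F_q`. -/
theorem stmt_18 (K : Type*) [Field K] [IsAlgClosed K] (p : ℕ) [Fact p.Prime] [CharP K p]
    (n : ℕ) (hn : 1 ≤ n) (q : ℕ) (hq : q = p ^ n) (c : K) (hc : c ≠ 0)
    (u v : K) (huv : (u ^ q + u) * (v ^ q + v) = c) (hu : u ^ q + u ≠ 0)
    (v₁ : K) (hv₁ : v₁ = -(c / (u ^ q + u) ^ 2)) :
    ((v + v₁ * u) ^ q + v₁ ^ q * u + v = 0) ↔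
      (c⁻¹ * (u ^ q + u) ^ 2) ^ q = c⁻¹ * (u ^ q + u) ^ 2 := by
  subst hq
  have hfr : (v + v₁ * u) ^ p ^ n = v ^ p ^ n + v₁ ^ p ^ n * u ^ p ^ n := by
    rw [add_pow_char_pow, mul_pow]
  have hneg : ∀ x : K, (-x) ^ p ^ n = -(x ^ p ^ n) := by
    intro x
    have := map_neg (iterateFrobenius K p n) x
    simpa [iterateFrobenius_def] using this
  have hv₁q : v₁ ^ p ^ n = -(c ^ p ^ n / ((u ^ p ^ n + u) ^ 2) ^ p ^ n) := by
    rw [hv₁, hneg, div_pow]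
  rw [hfr, hv₁q]
  have hs2 : (u ^ p ^ n + u) ^ 2 ≠ 0 := pow_ne_zero _ hu
  have hs2q : ((u ^ p ^ n + u) ^ 2) ^ p ^ n ≠ 0 := pow_ne_zero _ hs2
  constructor <;> intro h
  · have hd : c ^ p ^ n / ((u ^ p ^ n + u) ^ 2) ^ p ^ n * ((u ^ p ^ n + u) ^ 2) ^ p ^ n = c ^ p ^ n := div_mul_cancel₀ _ hs2q
    have h1 : (v ^ p ^ n + v) * ((u ^ p ^ n + u) ^ 2) ^ p ^ n = c ^ p ^ n * (u ^ p ^ n + u) := by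
      linear_combination ((u ^ p ^ n + u) ^ 2) ^ p ^ n * h + (u ^ p ^ n + u) * hd
    have h2 : c * ((u ^ p ^ n + u) ^ 2) ^ p ^ n = c ^ p ^ n * ((u ^ p ^ n + u) ^ 2) := by
      linear_combination (u ^ p ^ n + u) * h1 - ((u ^ p ^ n + u) ^ 2) ^ p ^ n * huv
    have hcc : c⁻¹ * c = 1 := inv_mul_cancel₀ hc
    rw [mul_pow, inv_pow, inv_mul_eq_iff_eq_mul₀ (pow_ne_zero _ hc)]
    linear_combination c⁻¹ * h2 - ((u ^ p ^ n + u) ^ 2) ^ p ^ n * hcc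
  · have key : (v ^ p ^ n + v) * ((u ^ p ^ n + u) ^ 2) ^ p ^ n
        = c ^ p ^ n * (u ^ p ^ n + u) := by
      have h' := h
      rw [mul_pow, inv_pow, inv_mul_eq_iff_eq_mul₀ (pow_ne_zero _ hc)] at h'
      have hcc2 : c * c⁻¹ = 1 := mul_inv_cancel₀ hc
      have h2 : c * ((u ^ p ^ n + u) ^ 2) ^ p ^ n = c ^ p ^ n * ((u ^ p ^ n + u) ^ 2) := by
        linear_combination c * h' + c ^ p ^ n * ((u ^ p ^ n + u) ^ 2) * hcc2
      apply mul_left_cancel₀ hu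
      linear_combination ((u ^ p ^ n + u) ^ 2) ^ p ^ n * huv + h2
    have hexp : ((u ^ p ^ n + u) ^ 2) ^ p ^ n
        = (u * u ^ p ^ n * 2 + u ^ 2 + u ^ (p ^ n * 2)) ^ p ^ n := by ring_nf
    field_simp at h ⊢
    linear_combination (norm := ring_nf) key
end
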